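/- Let φ: A* → A* be non-erasing with alph(φ^n(a)) = alph(φ(a)) for every a ∈ A and n ≥ 1, let A' be a leaf of the tree of invariant subalphabets of φ, let g ∈ A' be an unbounded letter, and let G' = (A', φ|_{A'}, g). If G' is pushy, then every infinite factor of L_{G'} contains arbitrarily long factors consisting only of bounded letters: for every M ∈ ℕ, every infinite word 𝐰 whose prefixes all lie in L_{G'} has a factor of length at least M over bounded letters. -/

import Mathlib

/-- The extension of the morphism given by `φ` on letters to a morphism on words. -/
def extM {A B : Type*} (φ : A → List B) (w : List A) : List B := w.flatMap φ

/-- The `k`-th power `u^k` of a word `u`. -/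
def wpow {A : Type*} (u : List A) (k : ℕ) : List A := (List.replicate k u).flatten

/-- A word `v` is primitive if `v = u^k` implies `k = 1`. -/
def Primitive {A : Type*} (v : List A) : Prop :=
  v ≠ [] ∧ ∀ (u : List A) (k : ℕ), v = wpow u k → k = 1

/-- The language of the D0L-system `(A, φ, w)`: all factors of the words `φ^n(w)`. -/
def LangD0L {A : Type*} (φ : A → List A) (w : List A) : Set (List A) :=
  {v | ∃ n : ℕ, v <:+: (extM φ)^[n] w}

/-- `fact(Ψ(L))`: all factors of `Ψ`-images of elements of `L`. -/
def factImg {A B : Type*} (Ψ : A → List B) (L : Set (List A)) : Set (List B) :=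
  {v | ∃ u ∈ L, v <:+: extM Ψ u}

/-- The language of the HD0L-system `(A, φ, w, Ψ)`. -/
def LangHD0L {A B : Type*} (φ : A → List A) (w : List A) (Ψ : A → List B) : Set (List B) :=
  factImg Ψ (LangD0L φ w)

/-- A morphism is non-erasing if no letter is mapped to the empty word. -/
def NonErasing {A B : Type*} (φ : A → List B) : Prop := ∀ a, φ a ≠ []

/-- A letter `b` is bounded (w.r.t. `φ`) if the lengths `|φ^n(b)|` are bounded. -/
def BddLetter {A : Type*} (φ : A → List A) (b : A) : Prop :=
  ∃ C : ℕ, ∀ n : ℕ, ((extM φ)^[n] [b]).length ≤ C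

/-- The set of letters occurring in a word. -/
def alph {A : Type*} (u : List A) : Set A := {a | a ∈ u}

/-- `alph(φ(S))` for a set of letters `S`: letters occurring in `φ(b)` for some `b ∈ S`. -/
def alphIm {A : Type*} (φ : A → List A) (S : Set A) : Set A := ⋃ b ∈ S, alph (φ b)

/-- A D0L-system is pushy if its language contains infinitely many words over bounded letters. -/
def Pushy {A : Type*} (φ : A → List A) (w : List A) : Prop :=
  {v ∈ LangD0L φ w | ∀ a ∈ v, BddLetter φ a}.Infinite

/-- A factorial language `L` is uniformly recurrent: for every `n` there is `K` such that
every element of `L` of length `K` contains every element of `L` of length `n` as a factor. -/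
def UnifRec {A : Type*} (L : Set (List A)) : Prop :=
  ∀ n : ℕ, ∃ K : ℕ, ∀ u ∈ L, u.length = K → ∀ v ∈ L, v.length = n → v <:+: u

/-- Vertices of the tree of invariant subalphabets of `φ`: nonempty sets `S` with
`alph(φ(S)) = S` containing an unbounded letter `a` with `alph(φ(a)) = S`. -/
def IsVertex {A : Type*} (φ : A → List A) (S : Set A) : Prop :=
  S.Nonempty ∧ alphIm φ S = S ∧ ∃ a ∈ S, ¬ BddLetter φ a ∧ alph (φ a) = S

/-- Leaves of the tree of invariant subalphabets: minimal vertices w.r.t. inclusion. -/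
def IsLeaf {A : Type*} (φ : A → List A) (S : Set A) : Prop :=
  IsVertex φ S ∧ ∀ T, IsVertex φ T → T ⊆ S → T = S

/-- Two words are conjugate: `u = xy` and `v = yx`. -/
def Conj {A : Type*} (u v : List A) : Prop := ∃ x y : List A, u = x ++ y ∧ v = y ++ x

/-- The prefix of length `n` of an infinite word. -/
def prefW {A : Type*} (w : ℕ → A) (n : ℕ) : List A := (List.range n).map w


namespace S11
variable {A : Type*}

variable {A : Type*}

theorem extM_append (φ : A → List A) (u v : List A) :
    extM φ (u ++ v) = extM φ u ++ extM φ v := List.flatMap_append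

theorem extM_singleton (φ : A → List A) (a : A) : extM φ [a] = φ a := by
  simp [extM]

theorem extM_cons (φ : A → List A) (a : A) (u : List A) :
    extM φ (a :: u) = φ a ++ extM φ u := by simp [extM]

theorem extM_nil (φ : A → List A) : extM φ [] = [] := rfl

theorem iter_nil (φ : A → List A) (n : ℕ) : (extM φ)^[n] [] = [] :=
  Function.iterate_fixed (extM_nil φ) n

theorem iter_append (φ : A → List A) (n : ℕ) (u v : List A) :
    (extM φ)^[n] (u ++ v) = (extM φ)^[n] u ++ (extM φ)^[n] v := by
  induction n generalizing u v with
  | zero => simp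
  | succ n ih =>
    rw [Function.iterate_succ_apply, Function.iterate_succ_apply,
      Function.iterate_succ_apply, extM_append, ih]

theorem mem_extM {φ : A → List A} {b : A} {u : List A} :
    b ∈ extM φ u ↔ ∃ c ∈ u, b ∈ φ c := List.mem_flatMap

theorem infix_extM (φ : A → List A) {u v : List A} (h : u <:+: v) :
    extM φ u <:+: extM φ v := by
  obtain ⟨s, t, rfl⟩ := h
  exact ⟨extM φ s, extM φ t, by rw [← extM_append, ← extM_append]⟩

theorem infix_iter (φ : A → List A) (n : ℕ) {u v : List A} (h : u <:+: v) :
    (extM φ)^[n] u <:+: (extM φ)^[n] v := by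
  induction n with
  | zero => exact h
  | succ n ih =>
    rw [Function.iterate_succ_apply', Function.iterate_succ_apply']
    exact infix_extM φ ih

theorem prefix_extM (φ : A → List A) {u v : List A} (h : u <+: v) :
    extM φ u <+: extM φ v := by
  obtain ⟨t, rfl⟩ := h
  exact ⟨extM φ t, (extM_append φ u t).symm⟩

theorem singleton_infix_of_mem {a : A} {u : List A} (h : a ∈ u) : [a] <:+: u := by
  obtain ⟨s, t, rfl⟩ := List.append_of_mem h
  exact ⟨s, t, by simp⟩

theorem ne_length_le {φ : A → List A} (hφ : NonErasing φ) (u : List A) :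
    u.length ≤ (extM φ u).length := by
  induction u with
  | nil => simp [extM_nil]
  | cons a u ih =>
    rw [extM_cons, List.length_append, List.length_cons]
    have : 1 ≤ (φ a).length := List.length_pos_iff.mpr (hφ a)
    omega

theorem ne_iter_length_le {φ : A → List A} (hφ : NonErasing φ) (n : ℕ) (u : List A) :
    u.length ≤ ((extM φ)^[n] u).length := by
  induction n with
  | zero => simp
  | succ n ih =>
    rw [Function.iterate_succ_apply']
    exact le_trans ih (ne_length_le hφ _)

theorem extM_length_le {φ : A → List A} {C0 : ℕ} (h : ∀ a, (φ a).length ≤ C0) (u : List A) :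
    (extM φ u).length ≤ C0 * u.length := by
  induction u with
  | nil => simp [extM_nil]
  | cons a u ih =>
    rw [extM_cons, List.length_append, List.length_cons]
    have := h a
    calc (φ a).length + (extM φ u).length ≤ C0 + C0 * u.length := by omega
    _ = C0 * (u.length + 1) := by ring

theorem extM_ne_nil {φ : A → List A} (hφ : NonErasing φ) {u : List A} (hu : u ≠ []) :
    extM φ u ≠ [] := by
  intro h
  have h1 : 1 ≤ u.length := List.length_pos_iff.mpr hu
  have := ne_length_le hφ u
  rw [h] at this
  simp only [List.length_nil] at this
  omega

-- prefW lemmas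
theorem prefW_length (w : ℕ → A) (n : ℕ) : (prefW w n).length = n := by simp [prefW]

theorem prefW_add (w : ℕ → A) (a b : ℕ) :
    prefW w (a + b) = prefW w a ++ (List.range b).map (fun i => w (a + i)) := by
  simp [prefW, List.range_add]

theorem prefW_succ (w : ℕ → A) (n : ℕ) : prefW w (n + 1) = prefW w n ++ [w n] := by
  rw [prefW_add]; simp [List.range_succ]

theorem take_prefW (w : ℕ → A) {k n : ℕ} (h : k ≤ n) : (prefW w n).take k = prefW w k := by
  simp [prefW, ← List.map_take, List.take_range, Nat.min_eq_left h]

theorem prefW_prefix (w : ℕ → A) {k n : ℕ} (h : k ≤ n) : prefW w k <+: prefW w n := by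
  rw [← take_prefW w h]; exact List.take_prefix k _

theorem prefW_getElem (w : ℕ → A) {n i : ℕ} (h : i < n) :
    (prefW w n)[i]'(by simp [prefW_length, h]) = w i := by
  simp [prefW]

theorem mem_prefW {w : ℕ → A} {n : ℕ} {a : A} :
    a ∈ prefW w n ↔ ∃ i < n, w i = a := by simp [prefW]

-- language facts
theorem lang_factorial {φ : A → List A} {w u v : List A}
    (h : u <:+: v) (hv : v ∈ LangD0L φ w) : u ∈ LangD0L φ w := by
  obtain ⟨n, hn⟩ := hv; exact ⟨n, h.trans hn⟩


variable {A : Type*}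

-- alph lemmas
theorem alph_extM (φ : A → List A) (u : List A) : alph (extM φ u) = alphIm φ (alph u) := by
  ext b
  simp only [alph, alphIm, Set.mem_setOf_eq, Set.mem_iUnion]
  exact mem_extM.trans (by simp [alph])

theorem alph_mono {u v : List A} (h : u <:+: v) : alph u ⊆ alph v := fun a ha => h.subset ha

theorem alph_sub_of_mem_vertex {φ : A → List A} {S : Set A} (hS : alphIm φ S = S)
    {a : A} (ha : a ∈ S) : alph (φ a) ⊆ S := by
  rw [← hS]; exact fun b hb => Set.mem_biUnion ha hb

-- boundedness
theorem bdd_of_mem_image {φ : A → List A} {c b : A} (hc : BddLetter φ c) (hb : b ∈ φ c) :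
    BddLetter φ b := by
  obtain ⟨C, hC⟩ := hc
  refine ⟨C, fun n => ?_⟩
  have h1 : (extM φ)^[n] [b] <:+: (extM φ)^[n] (φ c) :=
    infix_iter φ n (singleton_infix_of_mem hb)
  have h2 : (extM φ)^[n] (φ c) = (extM φ)^[n + 1] [c] := by
    rw [Function.iterate_succ_apply, extM_singleton]
  calc ((extM φ)^[n] [b]).length ≤ ((extM φ)^[n + 1] [c]).length := by
        rw [← h2]; exact h1.length_le
    _ ≤ C := hC (n + 1)

theorem bdd_word {φ : A → List A} {u : List A} (h : ∀ a ∈ u, BddLetter φ a) :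
    ∃ C, ∀ n, ((extM φ)^[n] u).length ≤ C := by
  induction u with
  | nil => exact ⟨0, fun n => by rw [iter_nil]; simp⟩
  | cons a u ih =>
    obtain ⟨C1, h1⟩ := h a List.mem_cons_self
    obtain ⟨C2, h2⟩ := ih (fun b hb => h b (List.mem_cons_of_mem a hb))
    refine ⟨C1 + C2, fun n => ?_⟩
    have : (a :: u) = [a] ++ u := rfl
    rw [this, iter_append, List.length_append]
    have := h1 n; have := h2 n; omega

theorem exists_unbdd_mem {φ : A → List A} {a : A} (ha : ¬ BddLetter φ a) :
    ∃ b ∈ φ a, ¬ BddLetter φ b := by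
  by_contra h
  push_neg at h
  obtain ⟨C, hC⟩ := bdd_word h
  refine ha ⟨max C 1, fun n => ?_⟩
  cases n with
  | zero => simp
  | succ n =>
    rw [Function.iterate_succ_apply, extM_singleton]
    exact le_trans (hC n) (le_max_left _ _)

theorem bdd_iter_letters {φ : A → List A} {u : List A} (h : ∀ a ∈ u, BddLetter φ a) (n : ℕ) :
    ∀ a ∈ (extM φ)^[n] u, BddLetter φ a := by
  induction n with
  | zero => exact h
  | succ n ih =>
    rw [Function.iterate_succ_apply']
    intro a hmem
    obtain ⟨c, hc, hac⟩ := mem_extM.mp hmem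
    exact bdd_of_mem_image (ih c hc) hac

-- pushy gives long bounded words
theorem pushy_long [Fintype A] {φ : A → List A} {g : A} (hpushy : Pushy φ [g]) (M : ℕ) :
    ∃ t, t ∈ LangD0L φ [g] ∧ M ≤ t.length ∧ ∀ a ∈ t, BddLetter φ a := by
  by_contra h
  push_neg at h
  have hsub : {v ∈ LangD0L φ [g] | ∀ a ∈ v, BddLetter φ a} ⊆ {l : List A | l.length ≤ M} := by
    rintro v ⟨hv, hbdd⟩
    by_contra hlen
    simp only [Set.mem_setOf_eq, not_le] at hlen
    obtain ⟨a, ha, hna⟩ := h v hv (le_of_lt hlen)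
    exact hna (hbdd a ha)
  exact hpushy (((List.finite_length_le A M).subset hsub))

-- letters of language words are in A'
theorem alph_iter_sub {φ : A → List A}
    (hstar : ∀ (a : A) (n : ℕ), 1 ≤ n → alph ((extM φ)^[n] [a]) = alph (φ a))
    {A' : Set A} (hinv : alphIm φ A' = A') {g : A} (hg : g ∈ A') (n : ℕ) :
    alph ((extM φ)^[n] [g]) ⊆ A' := by
  cases n with
  | zero => intro a ha; simp only [Function.iterate_zero_apply] at ha
            rcases (by simpa [alph] using ha : a = g) with rfl; exact hg
  | succ n =>
    rw [hstar g (n + 1) (by omega)]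
    exact alph_sub_of_mem_vertex hinv hg

theorem letters_in_A' {φ : A → List A}
    (hstar : ∀ (a : A) (n : ℕ), 1 ≤ n → alph ((extM φ)^[n] [a]) = alph (φ a))
    {A' : Set A} (hinv : alphIm φ A' = A') {g : A} (hg : g ∈ A')
    {u : List A} (hu : u ∈ LangD0L φ [g]) : ∀ a ∈ u, a ∈ A' := by
  obtain ⟨n, hn⟩ := hu
  intro a ha
  exact alph_iter_sub hstar hinv hg n (hn.subset ha)


variable {A : Type*}

/-- key step: image of a letter appearing at level d appears inside level d+1 -/
theorem phi_sub_iter {φ : A → List A} {c : A} {u : List A} {d : ℕ}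
    (hc : c ∈ (extM φ)^[d] u) : φ c <:+: (extM φ)^[d + 1] u := by
  have h1 : [c] <:+: (extM φ)^[d] u := singleton_infix_of_mem hc
  have h2 := infix_extM φ h1
  rw [extM_singleton] at h2
  rwa [Function.iterate_succ_apply'] 

/-- L1': for a leaf A', every unbounded letter a ∈ A' has g ∈ alph(φ a). -/
theorem leaf_g_mem [Fintype A] {φ : A → List A}
    (hstar : ∀ (a : A) (n : ℕ), 1 ≤ n → alph ((extM φ)^[n] [a]) = alph (φ a))
    {A' : Set A} (hA' : IsLeaf φ A') {g : A} (hg : g ∈ A')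
    {a : A} (haA : a ∈ A') (hau : ¬ BddLetter φ a) : g ∈ alph (φ a) := by
  classical
  have hinv : alphIm φ A' = A' := hA'.1.2.1
  -- build chain of unbounded letters
  have step : ∀ p : {b : A // ¬ BddLetter φ b}, ∃ q : {b : A // ¬ BddLetter φ b}, q.1 ∈ φ p.1 :=
    fun p => by
      obtain ⟨c, hc, hcu⟩ := exists_unbdd_mem p.2
      exact ⟨⟨c, hcu⟩, hc⟩
  let F : ℕ → {b : A // ¬ BddLetter φ b} :=
    fun n => Nat.rec ⟨a, hau⟩ (fun _ p => Classical.choose (step p)) n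
  have hF : ∀ k, (F (k + 1)).1 ∈ φ (F k).1 := fun k => Classical.choose_spec (step (F k))
  -- membership along the chain
  have hmem : ∀ k d, (F (k + d)).1 ∈ (extM φ)^[d] [(F k).1] := by
    intro k d
    induction d with
    | zero => simp
    | succ d ih =>
      have h1 := phi_sub_iter ih
      exact h1.subset (hF (k + d))
  -- pigeonhole
  obtain ⟨x, y, hxy, hfe⟩ := Finite.exists_ne_map_eq_of_infinite F
  wlog hlt : x < y generalizing x y
  · exact this y x hxy.symm hfe.symm (by omega)
  set b := (F x).1 with hb
  have hbu : ¬ BddLetter φ b := (F x).2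
  -- b ∈ alph (φ b)
  have hbself : b ∈ alph (φ b) := by
    have h1 : (F (x + (y - x))).1 ∈ (extM φ)^[y - x] [b] := hmem x (y - x)
    rw [show x + (y - x) = y by omega, ← hfe] at h1
    have h2 := hstar b (y - x) (by omega)
    rw [← h2]; exact h1
  -- S := alph (φ b) is a vertex
  set S := alph (φ b) with hS
  have hvert : IsVertex φ S := by
    refine ⟨⟨b, hbself⟩, ?_, ⟨b, hbself, hbu, rfl⟩⟩
    have h1 : alphIm φ S = alph (extM φ (φ b)) := (alph_extM φ (φ b)).symm
    have h2 : extM φ (φ b) = (extM φ)^[2] [b] := by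
      rw [show (2:ℕ) = 1 + 1 from rfl, Function.iterate_succ_apply', Function.iterate_one,
        extM_singleton]
    rw [h1, h2, hstar b 2 (by omega)]
  -- S ⊆ alph (φ a)
  have hSsub : S ⊆ alph (φ a) := by
    have h1 : b ∈ (extM φ)^[x] [a] := by
      have := hmem 0 x; rw [Nat.zero_add] at this; exact this
    have h2 : φ b <:+: (extM φ)^[x + 1] [a] := phi_sub_iter h1
    have h3 : alph (φ b) ⊆ alph ((extM φ)^[x + 1] [a]) := fun c hc => h2.subset hc
    rwa [hstar a (x + 1) (by omega)] at h3
  have hsubA' : S ⊆ A' := hSsub.trans (alph_sub_of_mem_vertex hinv haA)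
  have hSA : S = A' := hA'.2 S hvert hsubA'
  exact hSsub (hSA ▸ hg)


variable {A : Type*}

/-- block containing a position -/
theorem block_split (φ : A → List A) :
    ∀ (q : List A) (i : ℕ), i < (extM φ q).length →
    ∃ q₁ c q₂, q = q₁ ++ c :: q₂ ∧ (extM φ q₁).length ≤ i ∧
      i < (extM φ q₁).length + (φ c).length := by
  intro q
  induction q with
  | nil => intro i hi; rw [extM_nil] at hi; simp at hi
  | cons a q ih =>
    intro i hi
    by_cases h : i < (φ a).length
    · exact ⟨[], a, q, rfl, by simp [extM_nil], by simpa [extM_nil] using h⟩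
    · push_neg at h
      rw [extM_cons, List.length_append] at hi
      obtain ⟨q₁, c, q₂, he, h1, h2⟩ := ih (i - (φ a).length) (by omega)
      refine ⟨a :: q₁, c, q₂, by rw [he]; rfl, ?_, ?_⟩ <;>
        rw [extM_cons, List.length_append] <;> omega

/-- ultrafilter picks one set from a finite union -/
theorem ultra_pick {β : Type*} (𝒰 : Ultrafilter ℕ) (s : Finset β) (T : β → Set ℕ)
    (h : {m | ∃ v ∈ s, m ∈ T v} ∈ 𝒰) : ∃ v ∈ s, T v ∈ 𝒰 := by
  classical
  induction s using Finset.induction_on with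
  | empty =>
    exfalso
    have : {m | ∃ v ∈ (∅ : Finset β), m ∈ T v} = ∅ := by ext m; simp
    rw [this] at h
    exact Ultrafilter.empty_notMem (f := 𝒰) h
  | @insert x s hx ih =>
    have he : {m | ∃ v ∈ insert x s, m ∈ T v} = T x ∪ {m | ∃ v ∈ s, m ∈ T v} := by
      ext m
      simp only [Finset.mem_insert, Set.mem_setOf_eq, Set.mem_union]
      constructor
      · rintro ⟨v, (rfl | hv), hm⟩
        · exact Or.inl hm
        · exact Or.inr ⟨v, hv, hm⟩
      · rintro (hm | ⟨v, hv, hm⟩)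
        · exact ⟨x, Or.inl rfl, hm⟩
        · exact ⟨v, Or.inr hv, hm⟩
    rw [he, Ultrafilter.union_mem_iff] at h
    rcases h with h | h
    · exact ⟨x, Finset.mem_insert_self x s, h⟩
    · obtain ⟨v, hv, hT⟩ := ih h
      exact ⟨v, Finset.mem_insert_of_mem hv, hT⟩

theorem cofinite_mem (𝒰 : Ultrafilter ℕ) (h𝒰 : (𝒰 : Filter ℕ) ≤ Filter.cofinite) (N : ℕ) :
    {m : ℕ | N ≤ m} ∈ 𝒰 := by
  apply h𝒰
  rw [Filter.mem_cofinite]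
  apply Set.Finite.subset (Set.finite_Iio N)
  intro m hm
  simpa [Set.mem_Iio] using hm

/-- THE desubstitution lemma -/
theorem desub [Fintype A] (φ : A → List A) (hφ : NonErasing φ) (g : A)
    (w : ℕ → A) (hw : ∀ n, prefW w n ∈ LangD0L φ [g]) :
    ∃ (w' : ℕ → A) (j : ℕ), (∀ n, prefW w' n ∈ LangD0L φ [g]) ∧ j < (φ (w' 0)).length ∧
      ∀ n, j < n → (extM φ (prefW w' n)).drop j =
        prefW w ((extM φ (prefW w' n)).length - j) := by
  classical
  -- constants
  obtain ⟨C0, hC0⟩ : ∃ C0 : ℕ, ∀ a : A, (φ a).length ≤ C0 :=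
    ⟨Finset.univ.sup (fun a => (φ a).length),
     fun a => Finset.le_sup (f := fun a => (φ a).length) (Finset.mem_univ a)⟩
  -- per-m data
  have main : ∀ m : ℕ, ∃ (r : List A) (j : ℕ), 2 ≤ m →
      (j < (φ (r.getD 0 g)).length ∧
       (∃ Y, (extM φ r).drop j = prefW w m ++ Y) ∧
       (∀ v, v <:+: r → v ∈ LangD0L φ [g]) ∧
       j ≤ C0 ∧ m ≤ C0 * r.length) := by
    intro m
    by_cases hm : 2 ≤ m
    swap
    · exact ⟨[g], 0, fun h => absurd h hm⟩
    obtain ⟨n, hn⟩ := hw m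
    -- n ≥ 1
    cases n with
    | zero =>
      exfalso
      have := hn.length_le
      rw [prefW_length] at this
      simp at this; omega
    | succ n' =>
      rw [Function.iterate_succ_apply'] at hn
      set Q : List A := (extM φ)^[n'] [g] with hQ
      obtain ⟨X, Y, hXY⟩ := hn
      have hi : X.length < (extM φ Q).length := by
        rw [← hXY]
        simp only [List.length_append, prefW_length]
        omega
      obtain ⟨q₁, c, q₂, hqe, h1, h2⟩ := block_split φ Q X.length hi
      refine ⟨c :: q₂, X.length - (extM φ q₁).length, fun _ => ⟨?_, ⟨Y, ?_⟩, ?_, ?_, ?_⟩⟩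
      · simpa using (by omega : X.length - (extM φ q₁).length < (φ c).length)
      · -- drop computation
        have hsplit : extM φ Q = extM φ q₁ ++ extM φ (c :: q₂) := by
          rw [hqe, extM_append]
        have hd : extM φ (c :: q₂) = (extM φ Q).drop (extM φ q₁).length := by
          rw [hsplit, List.drop_left]
        rw [hd, List.drop_drop, show (extM φ q₁).length + (X.length - (extM φ q₁).length)
            = X.length by omega, ← hXY, List.append_assoc, List.drop_left]
      · -- factoriality
        intro v hv
        refine lang_factorial (hv.trans ?_) ⟨n', List.infix_refl Q⟩
        exact ⟨q₁, [], by rw [hqe]; simp⟩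
      · -- j ≤ C0
        have := hC0 c; omega
      · -- m ≤ C0 * length
        have hdl2 : (extM φ (c :: q₂)).drop (X.length - (extM φ q₁).length)
            = prefW w m ++ Y := by
          have hsplit : extM φ Q = extM φ q₁ ++ extM φ (c :: q₂) := by
            rw [hqe, extM_append]
          have hd : extM φ (c :: q₂) = (extM φ Q).drop (extM φ q₁).length := by
            rw [hsplit, List.drop_left]
          rw [hd, List.drop_drop, show (extM φ q₁).length + (X.length - (extM φ q₁).length)
              = X.length by omega, ← hXY, List.append_assoc, List.drop_left]
        have hlen : m ≤ (extM φ (c :: q₂)).length := by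
          have := congrArg List.length hdl2
          rw [List.length_drop, List.length_append, prefW_length] at this
          omega
        calc m ≤ (extM φ (c :: q₂)).length := hlen
          _ ≤ C0 * (c :: q₂).length := extM_length_le hC0 _
      
  choose R J hRJ using main
  -- ultrafilter setup
  set 𝒰 : Ultrafilter ℕ := Filter.hyperfilter ℕ with h𝒰def
  have hcof : (𝒰 : Filter ℕ) ≤ Filter.cofinite := Filter.hyperfilter_le_cofinite
  -- choose j
  have hJle : {m | ∃ v ∈ Finset.range (C0+1), m ∈ {m' | J m' = v}} ∈ 𝒰 := by
    apply Filter.mem_of_superset (cofinite_mem 𝒰 hcof 2)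
    intro m hm
    exact ⟨J m, Finset.mem_range.mpr (by have := (hRJ m hm).2.2.2.1; omega), rfl⟩
  obtain ⟨j, _, hj𝒰⟩ := ultra_pick 𝒰 (Finset.range (C0+1)) (fun v => {m' | J m' = v}) hJle
  -- choose letters
  have hlen𝒰 : ∀ i : ℕ, {m | i < (R m).length} ∈ 𝒰 := by
    intro i
    apply Filter.mem_of_superset (cofinite_mem 𝒰 hcof (max 2 (C0 * i + 1)))
    intro m hm
    simp only [Set.mem_setOf_eq] at hm ⊢
    have h2m : 2 ≤ m := le_trans (le_max_left _ _) hm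
    have hm2 := (hRJ m h2m).2.2.2.2
    have hlt : C0 * i < C0 * (R m).length := by
      have : C0 * i + 1 ≤ m := le_trans (le_max_right _ _) hm
      omega
    exact lt_of_mul_lt_mul_left hlt (Nat.zero_le _)
  have hpick : ∀ i : ℕ, ∃ a : A, {m | i < (R m).length ∧ (R m).getD i g = a} ∈ 𝒰 := by
    intro i
    have h1 : {m | ∃ v ∈ (Finset.univ : Finset A),
        m ∈ {m' | i < (R m').length ∧ (R m').getD i g = v}} ∈ 𝒰 := by
      apply Filter.mem_of_superset (hlen𝒰 i)
      intro m hm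
      exact ⟨(R m).getD i g, Finset.mem_univ _, hm, rfl⟩
    obtain ⟨a, _, ha⟩ := ultra_pick 𝒰 Finset.univ _ h1
    exact ⟨a, ha⟩
  choose w' hw' using hpick
  -- E n
  have hE0 : ∀ n : ℕ, {m | ∀ i < n, i < (R m).length ∧ (R m).getD i g = w' i} ∈ 𝒰 := by
    intro n
    induction n with
    | zero => exact Filter.mem_of_superset Filter.univ_mem (fun m _ i hi => absurd hi (by omega))
    | succ n ih =>
      apply Filter.mem_of_superset (Filter.inter_mem ih (hw' n))
      rintro m ⟨h1, h2⟩ i hi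
      rcases Nat.lt_succ_iff_lt_or_eq.mp hi with h | rfl
      · exact h1 i h
      · exact h2
  have hE : ∀ n : ℕ, {m | 2 ≤ m ∧ J m = j ∧
      ∀ i < n, i < (R m).length ∧ (R m).getD i g = w' i} ∈ 𝒰 := by
    intro n
    have hh := Filter.inter_mem (Filter.inter_mem (cofinite_mem 𝒰 hcof 2) hj𝒰) (hE0 n)
    apply Filter.mem_of_superset hh
    rintro m ⟨⟨h1, h2⟩, h3⟩
    exact ⟨h1, h2, h3⟩
  -- take n (R m) = prefW w' n for m ∈ E n
  have htake : ∀ n m, (∀ i < n, i < (R m).length ∧ (R m).getD i g = w' i) →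
      (R m).take n = prefW w' n := by
    intro n m hm
    apply List.ext_getElem
    · rw [List.length_take, prefW_length]
      rcases Nat.eq_zero_or_pos n with rfl | hn
      · simp
      · have := (hm (n-1) (by omega)).1; omega
    · intro i h1 h2
      rw [prefW_length] at h2
      have hi := hm i h2
      rw [List.getElem_take, prefW_getElem w' h2, ← hi.2, List.getD_eq_getElem _ _ hi.1]
  refine ⟨w', j, ?_, ?_, ?_⟩
  · -- prefixes in L
    intro n
    obtain ⟨m, hm⟩ := Filter.nonempty_of_mem (hE n)
    obtain ⟨h2m, hJm, hprops⟩ := hm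
    rw [← htake n m hprops]
    exact (hRJ m h2m).2.2.1 _ (List.take_prefix n (R m)).isInfix
  · -- j < |φ (w' 0)|
    obtain ⟨m, hm⟩ := Filter.nonempty_of_mem (hE 1)
    obtain ⟨h2m, hJm, hprops⟩ := hm
    have h0 := hprops 0 (by omega)
    have hb := (hRJ m h2m).1
    rw [h0.2] at hb
    rwa [hJm] at hb
  · -- the alignment
    intro n hn
    obtain ⟨m, hm, hmlarge⟩ : ∃ m, (2 ≤ m ∧ J m = j ∧
        ∀ i < n, i < (R m).length ∧ (R m).getD i g = w' i) ∧ C0 * n ≤ m := by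
      have hh := Filter.inter_mem (hE n) (cofinite_mem 𝒰 hcof (C0 * n))
      obtain ⟨m, h1, h2⟩ := Filter.nonempty_of_mem hh
      exact ⟨m, h1, h2⟩
    obtain ⟨h2m, hJm, hprops⟩ := hm
    obtain ⟨hj', ⟨Y, hY⟩, hfac, hjC, hmC⟩ := hRJ m h2m
    rw [hJm] at hY
    have hnR : n ≤ (R m).length := by
      have := (hprops (n-1) (by omega)).1; omega
    have htk : prefW w' n = (R m).take n := (htake n m hprops).symm
    set P := extM φ (prefW w' n) with hP
    set D := extM φ ((R m).drop n) with hD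
    have hsplit : extM φ (R m) = P ++ D := by
      rw [hP, hD, htk, ← extM_append, List.take_append_drop]
    have hjP : j ≤ P.length := by
      have hnP : n ≤ P.length := by
        have := ne_length_le hφ (prefW w' n)
        rwa [prefW_length] at this
      omega
    have hPm : P.length ≤ C0 * n := by
      have := extM_length_le hC0 (prefW w' n)
      rwa [prefW_length] at this
    have hdd : (extM φ (R m)).drop j = P.drop j ++ D := by
      rw [hsplit, List.drop_append_of_le_length hjP]
    rw [hdd] at hY
    have hlen1 : (P.drop j).length = P.length - j := List.length_drop
    have h1 : P.drop j = (prefW w m ++ Y).take (P.length - j) := by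
      rw [← hY, List.take_left' hlen1]
    rw [h1, List.take_append_of_le_length (by rw [prefW_length]; omega),
      take_prefW w (by omega : P.length - j ≤ m)]



variable {A : Type*}

/-- interior factor of an infinite word -/
def IntFac (u : List A) (w : ℕ → A) : Prop :=
  ∃ s n y, 1 ≤ s ∧ prefW w n = prefW w s ++ u ++ y

theorem intfac_infix {u : List A} {w : ℕ → A} (h : IntFac u w) : ∃ n, u <:+: prefW w n := by
  obtain ⟨s, n, y, _, heq⟩ := h
  exact ⟨n, ⟨prefW w s, y, heq.symm⟩⟩

/-- IntFac transfers through desubstitution -/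
theorem intfac_step (φ : A → List A) (hφ : NonErasing φ) {w w' : ℕ → A} {j : ℕ}
    (hj : j < (φ (w' 0)).length)
    (hrel : ∀ n, j < n → (extM φ (prefW w' n)).drop j =
      prefW w ((extM φ (prefW w' n)).length - j))
    {u : List A} (h : IntFac u w') : IntFac (extM φ u) w := by
  obtain ⟨s, n, y, hs, heq⟩ := h
  -- enlarge n to n' > j
  set n' := max n (j + 1) with hn'
  have hnn' : n ≤ n' := le_max_left _ _
  have heq' : prefW w' n' = prefW w' s ++ u ++ (y ++ (List.range (n' - n)).map
      (fun i => w' (n + i))) := by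
    have h1 : prefW w' n' = prefW w' n ++ (List.range (n' - n)).map (fun i => w' (n + i)) := by
      rw [← prefW_add w' n (n' - n), show n + (n' - n) = n' by omega]
    rw [h1, heq]
    simp [List.append_assoc]
  have hrel' := hrel n' (by omega)
  set ℓ := (extM φ (prefW w' n')).length with hℓ
  rw [heq'] at hrel'
  rw [extM_append, extM_append] at hrel'
  set B1 := extM φ (prefW w' s) with hB1
  set B2 := extM φ u with hB2
  set B3 := extM φ (y ++ (List.range (n' - n)).map (fun i => w' (n + i))) with hB3
  -- j < |B1|
  have hS : j < B1.length := by
    have h0 : prefW w' 1 = [w' 0] := by simp [prefW, List.range_succ]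
    have h1 : prefW w' s = [w' 0] ++ (List.range (s - 1)).map (fun i => w' (1 + i)) := by
      rw [← h0, ← prefW_add w' 1 (s - 1), show 1 + (s - 1) = s by omega]
    have h2 : B1 = φ (w' 0) ++ extM φ ((List.range (s - 1)).map (fun i => w' (1 + i))) := by
      rw [hB1, h1, extM_append, extM_singleton]
    rw [h2, List.length_append]
    omega
  have hdrop : (B1 ++ B2 ++ B3).drop j = B1.drop j ++ (B2 ++ B3) := by
    rw [List.append_assoc, List.drop_append_of_le_length (le_of_lt hS)]
  rw [hdrop] at hrel'
  -- lengths
  have hℓval : (B1 ++ B2 ++ B3).length = ℓ := by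
    rw [hℓ, heq', extM_append, extM_append]
  set s' := B1.length - j with hs'
  have hs'1 : 1 ≤ s' := by omega
  have hs'le : s' ≤ (B1 ++ B2 ++ B3).length - j := by
    simp only [List.length_append]; omega
  -- first chunk is prefW w s'
  have hchunk : B1.drop j = prefW w s' := by
    have h1 : (B1.drop j ++ (B2 ++ B3)).take s' = B1.drop j :=
      List.take_left' (by rw [List.length_drop])
    have h2 := congrArg (List.take s') hrel'
    rw [h1] at h2
    rw [h2, ← hℓval, take_prefW w hs'le]
  refine ⟨s', ℓ - j, B3, hs'1, ?_⟩
  rw [← hrel', hchunk, List.append_assoc]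


end S11

open S11
/-- Under Assumption ∗, for a leaf `A'`, an unbounded `g ∈ A'` and
`G' = (A', φ|_{A'}, g)` pushy, every infinite factor of `L_{G'}` contains arbitrarily long
factors over bounded letters. -/
theorem stmt11 {A : Type*} [Fintype A] (φ : A → List A) (hφ : NonErasing φ)
    (hstar : ∀ (a : A) (n : ℕ), 1 ≤ n → alph ((extM φ)^[n] [a]) = alph (φ a))
    (A' : Set A) (hA' : IsLeaf φ A')
    (g : A) (hg : g ∈ A') (hgu : ¬ BddLetter φ g)
    (hpushy : Pushy φ [g]) :
    ∀ winf : ℕ → A, (∀ n : ℕ, prefW winf n ∈ LangD0L φ [g]) →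
      ∀ M : ℕ, ∃ v : List A, (∃ n : ℕ, v <:+: prefW winf n) ∧ M ≤ v.length ∧
        ∀ a ∈ v, BddLetter φ a := by
  classical
  intro winf hwinf M
  obtain ⟨t, ⟨n0, ht⟩, htlen, htbdd⟩ := pushy_long hpushy M
  set N := n0 + 1 with hN
  -- iterated desubstitution chain
  let Pkg := {w : ℕ → A // ∀ n, prefW w n ∈ LangD0L φ [g]}
  have step : ∀ p : Pkg, ∃ q : Pkg, ∃ j, j < (φ (q.1 0)).length ∧
      ∀ n, j < n → (extM φ (prefW q.1 n)).drop j =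
        prefW p.1 ((extM φ (prefW q.1 n)).length - j) := by
    intro p
    obtain ⟨w', j, h1, h2, h3⟩ := desub φ hφ g p.1 p.2
    exact ⟨⟨w', h1⟩, j, h2, h3⟩
  let F : ℕ → Pkg := fun n => Nat.rec ⟨winf, hwinf⟩ (fun _ p => Classical.choose (step p)) n
  have hFsucc : ∀ k, F (k + 1) = Classical.choose (step (F k)) := fun k => rfl
  have hFspec : ∀ k, ∃ j, j < (φ ((F (k + 1)).1 0)).length ∧
      ∀ n, j < n → (extM φ (prefW (F (k + 1)).1 n)).drop j =
        prefW (F k).1 ((extM φ (prefW (F (k + 1)).1 n)).length - j) := by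
    intro k
    rw [hFsucc k]
    exact Classical.choose_spec (step (F k))
  -- transfer of interior factors
  have htransfer : ∀ k (u : List A), IntFac u (F k).1 → IntFac ((extM φ)^[k] u) winf := by
    intro k
    induction k with
    | zero => intro u h; exact h
    | succ k ih =>
      intro u h
      obtain ⟨j, hj, hrel⟩ := hFspec k
      have h1 : IntFac (extM φ u) (F k).1 := intfac_step φ hφ hj hrel h
      have h2 := ih (extM φ u) h1
      rwa [← Function.iterate_succ_apply] at h2
  set W := (F N).1 with hW
  by_cases hcase : ∃ i, 1 ≤ i ∧ ¬ BddLetter φ (W i)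
  · -- case 1: unbounded interior letter in W
    obtain ⟨i, hi1, hiu⟩ := hcase
    set a := W i with ha
    have hintfac : IntFac [a] W := by
      refine ⟨i, i + 1, [], hi1, ?_⟩
      rw [prefW_succ, List.append_nil]
    have h1 : IntFac ((extM φ)^[N] [a]) winf := htransfer N [a] hintfac
    obtain ⟨n, hinf⟩ := intfac_infix h1
    -- a ∈ A'
    have haA : a ∈ A' := by
      have hmem : a ∈ prefW W (i + 1) := by
        rw [mem_prefW]; exact ⟨i, by omega, rfl⟩
      exact letters_in_A' hstar hA'.1.2.1 hg ((F N).2 (i + 1)) a hmem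
    have hgmem : g ∈ alph (φ a) := leaf_g_mem hstar hA' hg haA hiu
    -- t <:+: (extM φ)^[N] [a]
    have h2 : [g] <:+: φ a := singleton_infix_of_mem hgmem
    have h3 : (extM φ)^[n0] [g] <:+: (extM φ)^[n0] (φ a) := infix_iter φ n0 h2
    have h4 : (extM φ)^[n0] (φ a) = (extM φ)^[N] [a] := by
      rw [hN, Function.iterate_succ_apply, extM_singleton]
    refine ⟨t, ⟨n, ?_⟩, htlen, htbdd⟩
    rw [h4] at h3
    exact (ht.trans h3).trans hinf
  · -- case 2: all interior letters of W bounded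
    push_neg at hcase
    set u := (List.range M).map (fun i => W (1 + i)) with hu
    have hintfac : IntFac u W := by
      refine ⟨1, 1 + M, [], le_refl 1, ?_⟩
      rw [prefW_add, List.append_nil]
    have h1 : IntFac ((extM φ)^[N] u) winf := htransfer N u hintfac
    obtain ⟨n, hinf⟩ := intfac_infix h1
    refine ⟨(extM φ)^[N] u, ⟨n, hinf⟩, ?_, ?_⟩
    · have h2 := ne_iter_length_le hφ N u
      have h3 : u.length = M := by rw [hu]; simp
      omega
    · apply bdd_iter_letters
      intro b hb
      rw [hu] at hb
      simp only [List.mem_map, List.mem_range] at hb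
      obtain ⟨i, _, rfl⟩ := hb
      exact hcase (1 + i) (by omega)
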